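/- Let k be a field and n ≥ 1. The map θ : (k[S_n] ⊗_{k[S_{n-1}]} k[S_n]) ⊕ k[S_n] → k[S_{n+1}] defined by θ(g₁ ⊗ g₂, g₃) = g₁·(n, n+1)·g₂ + g₃ is an isomorphism of (k[S_n], k[S_n])-bimodules. (Equivalently, ind ∘ res ⊕ id ≅ res ∘ ind as functors on k[S_n]-modules.) -/

import Mathlib

/-! Let `k` be a field and `n ≥ 1`.  We realize `S_{n+1} = Equiv.Perm (Fin (n+1))`
(letters `1,…,n+1` are indices `0,…,n`), `S_n` as the stabilizer `Hgp` of the last letter,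
and `S_{n-1}` as the subgroup `Kgp` fixing the letters `n` and `n+1`.  The map
`θ : (k[S_n] ⊗_{k[S_{n-1}]} k[S_n]) ⊕ k[S_n] → k[S_{n+1}]`,
`θ(g₁ ⊗ g₂, g₃) = g₁·(n,n+1)·g₂ + g₃`, is an isomorphism of `(k[S_n],k[S_n])`-bimodules.
This is expressed as: the `k`-linear map `Θ` on `(k[S_n] ⊗[k] k[S_n]) × k[S_n]` given by the
same formula is surjective with kernel exactly the submodule `Rel × ⊥`, where `Rel` is
spanned by the balancing relations `(g·c) ⊗ h − g ⊗ (c·h)` (`c ∈ S_{n-1}`) defining the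
tensor product over `k[S_{n-1}]`; moreover `Θ` intertwines the left and right
`k[S_n]`-actions. -/

noncomputable section

open scoped TensorProduct

variable (k : Type*) [Field k] (n : ℕ)

/-- index of the letter `n` in `Fin (n+1)` -/
def aIdx : Fin (n+1) := ⟨n-1, by omega⟩

/-- index of the letter `n+1` in `Fin (n+1)` -/
def bIdx : Fin (n+1) := ⟨n, by omega⟩

/-- the subgroup `S_n ⊆ S_{n+1}` of permutations fixing the letter `n+1` -/
def Hgp : Subgroup (Equiv.Perm (Fin (n+1))) :=
  MulAction.stabilizer (Equiv.Perm (Fin (n+1))) (bIdx n)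

/-- the subgroup `S_{n-1} ⊆ S_{n+1}` of permutations fixing the letters `n` and `n+1` -/
def Kgp : Subgroup (Equiv.Perm (Fin (n+1))) :=
  MulAction.stabilizer (Equiv.Perm (Fin (n+1))) (bIdx n) ⊓
    MulAction.stabilizer (Equiv.Perm (Fin (n+1))) (aIdx n)

lemma Kgp_le_Hgp : Kgp n ≤ Hgp n := inf_le_left

/-- the group algebra `k[S_{n+1}]` -/
abbrev GA := MonoidAlgebra k (Equiv.Perm (Fin (n+1)))

/-- the group algebra `k[S_n]` -/
abbrev HA := MonoidAlgebra k (Hgp n)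

/-- the inclusion `k[S_n] → k[S_{n+1}]` -/
def ι : HA k n →ₐ[k] GA k n :=
  MonoidAlgebra.lift k (GA k n) (Hgp n)
    ((MonoidAlgebra.of k (Equiv.Perm (Fin (n+1)))).comp (Hgp n).subtype)

/-- the transposition `(n, n+1)` as an element of `k[S_{n+1}]` -/
def sEl : GA k n :=
  MonoidAlgebra.of k (Equiv.Perm (Fin (n+1))) (Equiv.swap (aIdx n) (bIdx n))

/-- `θ₀(x ⊗ y) = x · (n,n+1) · y` -/
def θ₀ : (HA k n) ⊗[k] (HA k n) →ₗ[k] GA k n :=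
  TensorProduct.lift
    (LinearMap.mk₂ k (fun x y => ι k n x * sEl k n * ι k n y)
      (fun x x' y => by (try dsimp only); rw [map_add, add_mul, add_mul])
      (fun c x y => by (try dsimp only); rw [map_smul, smul_mul_assoc, smul_mul_assoc])
      (fun x y y' => by (try dsimp only); rw [map_add, mul_add])
      (fun c x y => by (try dsimp only); rw [map_smul, mul_smul_comm]))

/-- the balancing relations defining `k[S_n] ⊗_{k[S_{n-1}]} k[S_n]` as a quotient of
`k[S_n] ⊗[k] k[S_n]` -/
def balRel : Submodule k ((HA k n) ⊗[k] (HA k n)) :=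
  Submodule.span k
    { t | ∃ (g h : Hgp n) (c : Kgp n),
        t = (MonoidAlgebra.of k (Hgp n) (g * Subgroup.inclusion (Kgp_le_Hgp n) c)) ⊗ₜ[k]
              (MonoidAlgebra.of k (Hgp n) h)
          - (MonoidAlgebra.of k (Hgp n) g) ⊗ₜ[k]
              (MonoidAlgebra.of k (Hgp n) (Subgroup.inclusion (Kgp_le_Hgp n) c * h)) }

/-- the combined map `Θ(x ⊗ y, g) = x·(n,n+1)·y + g` on `(k[S_n] ⊗[k] k[S_n]) × k[S_n]` -/
def Θ : ((HA k n) ⊗[k] (HA k n)) × (HA k n) →ₗ[k] GA k n :=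
  LinearMap.coprod (θ₀ k n) (ι k n).toLinearMap

section Aux

variable {k : Type*} [Field k] {n : ℕ}

lemma H_fix_b (g : Hgp n) : (g : Equiv.Perm (Fin (n+1))) (bIdx n) = bIdx n := g.2

lemma K_fix_b (c : Kgp n) : (c : Equiv.Perm (Fin (n+1))) (bIdx n) = bIdx n := c.2.1

lemma K_fix_a (c : Kgp n) : (c : Equiv.Perm (Fin (n+1))) (aIdx n) = aIdx n := c.2.2

lemma a_ne_b (hn : 1 ≤ n) : aIdx n ≠ bIdx n := by
  simp only [aIdx, bIdx, ne_eq, Fin.mk.injEq]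
  omega

lemma K_comm_s (c : Kgp n) :
    (c : Equiv.Perm (Fin (n+1))) * Equiv.swap (aIdx n) (bIdx n)
      = Equiv.swap (aIdx n) (bIdx n) * c := by
  rw [Equiv.mul_swap_eq_swap_mul, K_fix_a, K_fix_b]

lemma hga_ne (hn : 1 ≤ n) (g : Hgp n) :
    (g : Equiv.Perm (Fin (n+1))) (aIdx n) ≠ bIdx n := fun heq =>
  a_ne_b hn (g.1.injective (heq.trans (H_fix_b g).symm))

lemma conj_key (hn : 1 ≤ n) (g : Hgp n) :
    Equiv.swap (aIdx n) ((g : Equiv.Perm (Fin (n+1))) (aIdx n)) *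
      Equiv.swap (aIdx n) (bIdx n) *
      Equiv.swap (aIdx n) ((g : Equiv.Perm (Fin (n+1))) (aIdx n))
    = (g : Equiv.Perm (Fin (n+1))) * Equiv.swap (aIdx n) (bIdx n) *
        (g : Equiv.Perm (Fin (n+1)))⁻¹ := by
  set t := Equiv.swap (aIdx n) ((g : Equiv.Perm (Fin (n+1))) (aIdx n)) with ht
  calc t * Equiv.swap (aIdx n) (bIdx n) * t
      = t * Equiv.swap (aIdx n) (bIdx n) * t⁻¹ := by rw [ht, Equiv.swap_inv]
    _ = Equiv.swap (t (aIdx n)) (t (bIdx n)) := (Equiv.swap_apply_apply t _ _).symm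
    _ = Equiv.swap ((g : Equiv.Perm (Fin (n+1))) (aIdx n))
          ((g : Equiv.Perm (Fin (n+1))) (bIdx n)) := by
        rw [ht, Equiv.swap_apply_left,
          Equiv.swap_apply_of_ne_of_ne (a_ne_b hn).symm (Ne.symm (hga_ne hn g))]
        rw [H_fix_b]
    _ = _ := Equiv.swap_apply_apply _ _ _

lemma group_key (hn : 1 ≤ n) (g h : Hgp n) :
    ((g : Equiv.Perm (Fin (n+1)))⁻¹ *
        Equiv.swap (aIdx n) ((g : Equiv.Perm (Fin (n+1))) (aIdx n))) *
      (Equiv.swap (aIdx n) (bIdx n) *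
        Equiv.swap (aIdx n) ((g : Equiv.Perm (Fin (n+1))) (aIdx n)) *
        ((g : Equiv.Perm (Fin (n+1))) * Equiv.swap (aIdx n) (bIdx n) *
          (h : Equiv.Perm (Fin (n+1))))) = (h : Equiv.Perm (Fin (n+1))) := by
  set t := Equiv.swap (aIdx n) ((g : Equiv.Perm (Fin (n+1))) (aIdx n)) with ht
  set s := Equiv.swap (aIdx n) (bIdx n) with hs
  set G := (g : Equiv.Perm (Fin (n+1))) with hG
  set H := (h : Equiv.Perm (Fin (n+1))) with hH
  have e1 : (G⁻¹ * t) * (s * t * (G * s * H)) = G⁻¹ * ((t * s * t) * (G * (s * H))) := by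
    group
  have key : t * s * t = G * s * G⁻¹ := by rw [ht, hs, hG]; exact conj_key hn g
  rw [e1, key, hs]
  simp [mul_assoc, Equiv.swap_mul_self_mul]

end Aux

lemma ι_of (u : Hgp n) :
    ι k n (MonoidAlgebra.of k (Hgp n) u)
      = MonoidAlgebra.of k (Equiv.Perm (Fin (n+1))) (u : Equiv.Perm (Fin (n+1))) := by
  simp [ι]

lemma Θ_of (g h : Hgp n) :
    Θ k n ((MonoidAlgebra.of k (Hgp n) g) ⊗ₜ[k] (MonoidAlgebra.of k (Hgp n) h), 0)
      = MonoidAlgebra.of k (Equiv.Perm (Fin (n+1)))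
          ((g : Equiv.Perm (Fin (n+1))) * Equiv.swap (aIdx n) (bIdx n) * h) := by
  simp only [Θ, LinearMap.coprod_apply, θ₀, TensorProduct.lift.tmul, LinearMap.mk₂_apply,
    AlgHom.toLinearMap_apply, map_zero, add_zero, ι_of, sEl, ← map_mul]

lemma Θ_inr (x : HA k n) : Θ k n (0, x) = ι k n x := by
  simp [Θ]

lemma θ₀_of (g h : Hgp n) :
    θ₀ k n ((MonoidAlgebra.of k (Hgp n) g) ⊗ₜ[k] (MonoidAlgebra.of k (Hgp n) h))
      = MonoidAlgebra.of k (Equiv.Perm (Fin (n+1)))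
          ((g : Equiv.Perm (Fin (n+1))) * Equiv.swap (aIdx n) (bIdx n) * h) := by
  have := Θ_of k n g h
  simpa [Θ] using this

/-- canonical section on group elements -/
def Φdec (hn : 1 ≤ n) (w : Equiv.Perm (Fin (n+1))) :
    ((HA k n) ⊗[k] (HA k n)) × (HA k n) :=
  if h : w (bIdx n) = bIdx n then (0, MonoidAlgebra.of k (Hgp n) ⟨w, h⟩)
  else
    ((MonoidAlgebra.of k (Hgp n)
        ⟨Equiv.swap (aIdx n) (w (bIdx n)),
          Equiv.swap_apply_of_ne_of_ne (a_ne_b hn).symm (Ne.symm h)⟩) ⊗ₜ[k]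
     (MonoidAlgebra.of k (Hgp n)
        ⟨Equiv.swap (aIdx n) (bIdx n) * Equiv.swap (aIdx n) (w (bIdx n)) * w, by
          show (Equiv.swap (aIdx n) (bIdx n))
            ((Equiv.swap (aIdx n) (w (bIdx n))) (w (bIdx n))) = bIdx n
          rw [Equiv.swap_apply_right, Equiv.swap_apply_left]⟩), 0)

/-- the linear section -/
def Φ (hn : 1 ≤ n) : GA k n →ₗ[k] ((HA k n) ⊗[k] (HA k n)) × (HA k n) :=
  (Finsupp.lift _ k _ (Φdec k n hn)).comp (MonoidAlgebra.coeffLinearEquiv k).toLinearMap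

lemma Φ_of (hn : 1 ≤ n) (w : Equiv.Perm (Fin (n+1))) :
    Φ k n hn (MonoidAlgebra.of k (Equiv.Perm (Fin (n+1))) w) = Φdec k n hn w := by
  simp only [Φ, MonoidAlgebra.of_apply, LinearMap.comp_apply, LinearEquiv.coe_coe,
    MonoidAlgebra.coeffLinearEquiv_apply, MonoidAlgebra.coeff_single]
  erw [Finsupp.lift_apply, Finsupp.sum_single_index (by simp), one_smul]

lemma Θ_Φdec (hn : 1 ≤ n) (w : Equiv.Perm (Fin (n+1))) :
    Θ k n (Φdec k n hn w) = MonoidAlgebra.of k (Equiv.Perm (Fin (n+1))) w := by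
  unfold Φdec
  split_ifs with h
  · rw [Θ_inr, ι_of]
  · rw [Θ_of]
    congr 1
    simp [mul_assoc, Equiv.swap_mul_self_mul]

lemma Θ_Φ (hn : 1 ≤ n) (x : GA k n) : Θ k n (Φ k n hn x) = x := by
  induction x using MonoidAlgebra.induction_on with
  | of g => rw [Φ_of, Θ_Φdec]
  | add f g hf hg => rw [map_add, map_add, hf, hg]
  | smul r f hf => rw [map_smul, map_smul, hf]

lemma balRel_le_ker : balRel k n ≤ LinearMap.ker (θ₀ k n) := by
  rw [balRel, Submodule.span_le]
  rintro t ⟨g, h, c, rfl⟩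
  simp only [SetLike.mem_coe, LinearMap.mem_ker, map_sub, θ₀_of, sub_eq_zero]
  congr 1
  simp only [Subgroup.coe_mul, Subgroup.coe_inclusion]
  rw [mul_assoc (g : Equiv.Perm (Fin (n+1))) (c : Equiv.Perm (Fin (n+1)))
    (Equiv.swap (aIdx n) (bIdx n)), K_comm_s, ← mul_assoc, mul_assoc]

lemma ΦΘ_core (hn : 1 ≤ n) (g h : Hgp n) :
    Φ k n hn (Θ k n ((MonoidAlgebra.of k (Hgp n) g) ⊗ₜ[k] (MonoidAlgebra.of k (Hgp n) h), 0))
      - ((MonoidAlgebra.of k (Hgp n) g) ⊗ₜ[k] (MonoidAlgebra.of k (Hgp n) h), 0)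
      ∈ (balRel k n).prod (⊥ : Submodule k (HA k n)) := by
  rw [Θ_of, Φ_of]
  set w := (g : Equiv.Perm (Fin (n+1))) * Equiv.swap (aIdx n) (bIdx n) *
    (h : Equiv.Perm (Fin (n+1))) with hw
  have hwb : w (bIdx n) = (g : Equiv.Perm (Fin (n+1))) (aIdx n) := by
    rw [hw]
    simp [Equiv.Perm.mul_apply, H_fix_b h, Equiv.swap_apply_right]
  have hne : ¬ (w (bIdx n) = bIdx n) := by rw [hwb]; exact hga_ne hn g
  unfold Φdec
  rw [dif_neg hne]
  simp only [hwb]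
  set t := Equiv.swap (aIdx n) ((g : Equiv.Perm (Fin (n+1))) (aIdx n)) with ht
  have p1' : t (bIdx n) = bIdx n :=
    Equiv.swap_apply_of_ne_of_ne (a_ne_b hn).symm (Ne.symm (hga_ne hn g))
  have p1 : t ∈ Hgp n := p1'
  have p2 : Equiv.swap (aIdx n) (bIdx n) * t * w ∈ Hgp n := by
    show (Equiv.swap (aIdx n) (bIdx n)) (t (w (bIdx n))) = bIdx n
    rw [hwb, ht, Equiv.swap_apply_right, Equiv.swap_apply_left]
  have hmemc : (g : Equiv.Perm (Fin (n+1)))⁻¹ * t ∈ Kgp n := by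
    constructor
    · show ((g : Equiv.Perm (Fin (n+1)))⁻¹) (t (bIdx n)) = bIdx n
      have h2 : (g : Equiv.Perm (Fin (n+1)))⁻¹ (bIdx n) = bIdx n := by
        conv_lhs => rw [← H_fix_b g]
        exact Equiv.symm_apply_apply _ _
      rw [p1', h2]
    · show ((g : Equiv.Perm (Fin (n+1)))⁻¹) (t (aIdx n)) = aIdx n
      rw [ht, Equiv.swap_apply_left, Equiv.Perm.inv_def, Equiv.symm_apply_apply]
  refine Submodule.mem_prod.mpr ⟨?_, by simp⟩
  show (MonoidAlgebra.of k (Hgp n) ⟨t, p1⟩) ⊗ₜ[k]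
      (MonoidAlgebra.of k (Hgp n) ⟨Equiv.swap (aIdx n) (bIdx n) * t * w, p2⟩)
      - (MonoidAlgebra.of k (Hgp n) g) ⊗ₜ[k] (MonoidAlgebra.of k (Hgp n) h) ∈ balRel k n
  apply Submodule.subset_span
  refine ⟨g, ⟨Equiv.swap (aIdx n) (bIdx n) * t * w, p2⟩,
    ⟨(g : Equiv.Perm (Fin (n+1)))⁻¹ * t, hmemc⟩, ?_⟩
  have e2 : g * Subgroup.inclusion (Kgp_le_Hgp n)
      ⟨(g : Equiv.Perm (Fin (n+1)))⁻¹ * t, hmemc⟩ = (⟨t, p1⟩ : Hgp n) := by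
    apply Subtype.ext
    show (g : Equiv.Perm (Fin (n+1))) * ((g : Equiv.Perm (Fin (n+1)))⁻¹ * t) = t
    rw [mul_inv_cancel_left]
  have e3 : Subgroup.inclusion (Kgp_le_Hgp n)
        ⟨(g : Equiv.Perm (Fin (n+1)))⁻¹ * t, hmemc⟩ *
      (⟨Equiv.swap (aIdx n) (bIdx n) * t * w, p2⟩ : Hgp n) = h := by
    apply Subtype.ext
    show ((g : Equiv.Perm (Fin (n+1)))⁻¹ * t) *
      (Equiv.swap (aIdx n) (bIdx n) * t * w) = (h : Equiv.Perm (Fin (n+1)))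
    rw [hw, ht]
    exact group_key hn g h
  rw [e2, e3]

lemma ΦΘ_mem (hn : 1 ≤ n) (x : ((HA k n) ⊗[k] (HA k n)) × (HA k n)) :
    Φ k n hn (Θ k n x) - x ∈ (balRel k n).prod (⊥ : Submodule k (HA k n)) := by
  set S := (balRel k n).prod (⊥ : Submodule k (HA k n)) with hS
  have hP : ∀ u v : ((HA k n) ⊗[k] (HA k n)) × (HA k n),
      Φ k n hn (Θ k n u) - u ∈ S → Φ k n hn (Θ k n v) - v ∈ S →
      Φ k n hn (Θ k n (u + v)) - (u + v) ∈ S := by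
    intro u v hu hv
    have h := Submodule.add_mem S hu hv
    have e : Φ k n hn (Θ k n (u + v)) - (u + v)
        = (Φ k n hn (Θ k n u) - u) + (Φ k n hn (Θ k n v) - v) := by
      rw [map_add, map_add]; abel
    rw [e]; exact h
  have hPs : ∀ (r : k) (u : ((HA k n) ⊗[k] (HA k n)) × (HA k n)),
      Φ k n hn (Θ k n u) - u ∈ S → Φ k n hn (Θ k n (r • u)) - r • u ∈ S := by
    intro r u hu
    have h := Submodule.smul_mem S r hu
    have e : Φ k n hn (Θ k n (r • u)) - r • u = r • (Φ k n hn (Θ k n u) - u) := by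
      rw [map_smul, map_smul, smul_sub]
    rw [e]; exact h
  have h2 : ∀ y : HA k n, Φ k n hn (Θ k n (0, y)) - (0, y) ∈ S := by
    intro y
    induction y using MonoidAlgebra.induction_on with
    | of u =>
      rw [Θ_inr, ι_of, Φ_of]
      unfold Φdec
      rw [dif_pos (H_fix_b u)]
      have : (⟨(u : Equiv.Perm (Fin (n+1))), H_fix_b u⟩ : Hgp n) = u := rfl
      rw [this, sub_self]
      exact Submodule.zero_mem S
    | add f g hf hg =>
      have e : ((0 : (HA k n) ⊗[k] (HA k n)), f + g)
          = ((0 : (HA k n) ⊗[k] (HA k n)), f) + ((0 : (HA k n) ⊗[k] (HA k n)), g) := by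
        simp
      rw [e]; exact hP _ _ hf hg
    | smul r f hf =>
      have e : ((0 : (HA k n) ⊗[k] (HA k n)), r • f)
          = r • ((0 : (HA k n) ⊗[k] (HA k n)), f) := by simp
      rw [e]; exact hPs _ _ hf
  have h1 : ∀ t : (HA k n) ⊗[k] (HA k n), Φ k n hn (Θ k n (t, 0)) - (t, 0) ∈ S := by
    intro t
    induction t using TensorProduct.induction_on with
    | zero => simp only [Prod.mk_zero_zero, map_zero, sub_zero]; exact Submodule.zero_mem S
    | add u v hu hv =>
      have e : ((u + v : (HA k n) ⊗[k] (HA k n)), (0 : HA k n))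
          = ((u, (0 : HA k n)) + (v, (0 : HA k n))) := by simp
      rw [e]; exact hP _ _ hu hv
    | tmul x y =>
      induction x using MonoidAlgebra.induction_on with
      | of g =>
        induction y using MonoidAlgebra.induction_on with
        | of h => exact ΦΘ_core k n hn g h
        | add y1 y2 hy1 hy2 =>
          have e : ((MonoidAlgebra.of k (Hgp n) g) ⊗ₜ[k] (y1 + y2), (0 : HA k n))
              = ((MonoidAlgebra.of k (Hgp n) g) ⊗ₜ[k] y1, (0 : HA k n))
                + ((MonoidAlgebra.of k (Hgp n) g) ⊗ₜ[k] y2, (0 : HA k n)) := by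
            rw [TensorProduct.tmul_add]; simp
          rw [e]; exact hP _ _ hy1 hy2
        | smul r y hy =>
          have e : ((MonoidAlgebra.of k (Hgp n) g) ⊗ₜ[k] (r • y), (0 : HA k n))
              = r • ((MonoidAlgebra.of k (Hgp n) g) ⊗ₜ[k] y, (0 : HA k n)) := by
            rw [TensorProduct.tmul_smul]; simp
          rw [e]; exact hPs _ _ hy
      | add x1 x2 hx1 hx2 =>
        have e : ((x1 + x2) ⊗ₜ[k] y, (0 : HA k n))
            = (x1 ⊗ₜ[k] y, (0 : HA k n)) + (x2 ⊗ₜ[k] y, (0 : HA k n)) := by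
          rw [TensorProduct.add_tmul]; simp
        rw [e]; exact hP _ _ hx1 hx2
      | smul r x hx =>
        have e : ((r • x) ⊗ₜ[k] y, (0 : HA k n)) = r • (x ⊗ₜ[k] y, (0 : HA k n)) := by
          rw [← TensorProduct.smul_tmul']; simp
        rw [e]; exact hPs _ _ hx
  obtain ⟨t, y⟩ := x
  have e : (t, y) = (t, (0 : HA k n)) + ((0 : (HA k n) ⊗[k] (HA k n)), y) := by simp
  rw [e]
  exact hP _ _ (h1 t) (h2 y)

theorem stmt7 (k : Type*) [Field k] (n : ℕ) (hn : 1 ≤ n) :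
    LinearMap.range (Θ k n) = ⊤
    ∧ LinearMap.ker (Θ k n) = (balRel k n).prod (⊥ : Submodule k (HA k n))
    ∧ (∀ (u : Hgp n) (g₁ g₂ g₃ : HA k n),
        Θ k n ((MonoidAlgebra.of k (Hgp n) u * g₁) ⊗ₜ[k] g₂,
               MonoidAlgebra.of k (Hgp n) u * g₃)
          = ι k n (MonoidAlgebra.of k (Hgp n) u) * Θ k n (g₁ ⊗ₜ[k] g₂, g₃))
    ∧ (∀ (u : Hgp n) (g₁ g₂ g₃ : HA k n),
        Θ k n (g₁ ⊗ₜ[k] (g₂ * MonoidAlgebra.of k (Hgp n) u),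
               g₃ * MonoidAlgebra.of k (Hgp n) u)
          = Θ k n (g₁ ⊗ₜ[k] g₂, g₃) * ι k n (MonoidAlgebra.of k (Hgp n) u)) := by

  refine ⟨?_, ?_, ?_, ?_⟩
  · rw [LinearMap.range_eq_top]
    exact fun x => ⟨Φ k n hn x, Θ_Φ k n hn x⟩
  · apply le_antisymm
    · intro x hx
      have h := ΦΘ_mem k n hn x
      rw [LinearMap.mem_ker.mp hx, map_zero, zero_sub] at h
      exact (Submodule.neg_mem_iff _).mp h
    · intro x hx
      obtain ⟨h1, h2⟩ := Submodule.mem_prod.mp hx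
      rw [LinearMap.mem_ker]
      have e : Θ k n x = θ₀ k n x.1 + ι k n x.2 := rfl
      rw [e, (Submodule.mem_bot k).mp h2, map_zero, add_zero]
      exact balRel_le_ker k n h1
  · intro u g₁ g₂ g₃
    simp only [Θ, LinearMap.coprod_apply, θ₀, TensorProduct.lift.tmul, LinearMap.mk₂_apply,
      AlgHom.toLinearMap_apply, map_mul, mul_add, mul_assoc]
  · intro u g₁ g₂ g₃
    simp only [Θ, LinearMap.coprod_apply, θ₀, TensorProduct.lift.tmul, LinearMap.mk₂_apply,
      AlgHom.toLinearMap_apply, map_mul, add_mul, mul_assoc]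


end
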